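/- Let A be a subspace of ℝ^n of dimension d, let e ∈ {1,…,n−1}, and let j ∈ {1,…,min(d,e) − g(d,e,n)}. Then A is (e,j)-irrational if and only if the orthogonal complement A^⊥ of A in ℝ^n is (n−e,j)-irrational. -/

import Mathlib

noncomputable section

open Finset Module

/-- A vector of `ℝⁿ` with integer coordinates. -/
def IsIntVec {n : ℕ} (v : EuclideanSpace ℝ (Fin n)) : Prop :=
  ∀ i, ∃ z : ℤ, v i = (z : ℝ)

/-- A rational subspace of `ℝⁿ`: one spanned by vectors with rational coordinates. -/
def IsRationalSubspace {n : ℕ} (B : Submodule ℝ (EuclideanSpace ℝ (Fin n))) : Prop :=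
  ∃ s : Set (EuclideanSpace ℝ (Fin n)),
    (∀ v ∈ s, ∀ i, ∃ q : ℚ, v i = (q : ℝ)) ∧ Submodule.span ℝ s = B

/-- `A` is `(e,j)`-irrational: every rational subspace `B` of dimension `e` satisfies
`dim (A ⊓ B) < j + g(dim A, e, n)` where `g(d,e,n) = max 0 (d+e-n)`. -/
def IsIrrational {n : ℕ} (A : Submodule ℝ (EuclideanSpace ℝ (Fin n))) (e j : ℕ) : Prop :=
  ∀ B : Submodule ℝ (EuclideanSpace ℝ (Fin n)),
    IsRationalSubspace B → finrank ℝ B = e →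
      finrank ℝ ↥(A ⊓ B) < j + (finrank ℝ A + e - n)

/-- The angle `ω(X,Y) = ‖X∧Y‖ / (‖X‖·‖Y‖)`. -/
def omegaAngle {n : ℕ} (X Y : EuclideanSpace ℝ (Fin n)) : ℝ :=
  Real.sqrt (‖X‖ ^ 2 * ‖Y‖ ^ 2 - (inner ℝ X Y : ℝ) ^ 2) / (‖X‖ * ‖Y‖)

/-- First angle `ψ₁(A,B)` between two subspaces. -/
def psiOne {n : ℕ} (A B : Submodule ℝ (EuclideanSpace ℝ (Fin n))) : ℝ :=
  sInf {t | ∃ X ∈ A, X ≠ 0 ∧ ∃ Y ∈ B, Y ≠ 0 ∧ t = omegaAngle X Y}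

/-- `‖X₁ ∧ ⋯ ∧ X_e‖`, as the square root of the Gram determinant. -/
def gramNorm {n e : ℕ} (X : Fin e → EuclideanSpace ℝ (Fin n)) : ℝ :=
  Real.sqrt (Matrix.of fun i j : Fin e => (inner ℝ (X i) (X j) : ℝ)).det

/-- `X` is a `ℤ`-basis of the lattice `B ∩ ℤⁿ`. -/
def IsZBasis {n e : ℕ} (X : Fin e → EuclideanSpace ℝ (Fin n))
    (B : Submodule ℝ (EuclideanSpace ℝ (Fin n))) : Prop :=
  (∀ i, X i ∈ B) ∧ (∀ i, IsIntVec (X i)) ∧ LinearIndependent ℝ X ∧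
    ∀ v ∈ B, IsIntVec v → ∃ c : Fin e → ℤ, v = ∑ i, (c i : ℝ) • X i

/-- The height `H(B)` of a rational subspace: the common value of `‖X₁ ∧ ⋯ ∧ X_e‖`
over `ℤ`-bases of the lattice `B ∩ ℤⁿ`. -/
def height {n : ℕ} (B : Submodule ℝ (EuclideanSpace ℝ (Fin n))) : ℝ :=
  sSup {h | ∃ e : ℕ, ∃ X : Fin e → EuclideanSpace ℝ (Fin n), IsZBasis X B ∧ h = gramNorm X}

/-- The Diophantine exponent `μ_n(A|e)₁ ∈ ℝ ∪ {+∞}`. -/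
def diophExp {n : ℕ} (A : Submodule ℝ (EuclideanSpace ℝ (Fin n))) (e : ℕ) : EReal :=
  sSup {x : EReal | ∃ μ : ℝ, x = (μ : ℝ) ∧ 0 < μ ∧
    {B : Submodule ℝ (EuclideanSpace ℝ (Fin n)) |
      IsRationalSubspace B ∧ finrank ℝ B = e ∧ psiOne A B ≤ height B ^ (-μ)}.Infinite}


namespace Statement4Aux

open Matrix Set

variable {n : ℕ}

/-- Cast a rational vector to `EuclideanSpace ℝ (Fin n)`. -/
def qc (v : Fin n → ℚ) : EuclideanSpace ℝ (Fin n) := WithLp.toLp 2 (fun i => ((v i : ℝ)))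

lemma li_real {k : ℕ} {w : Fin k → (Fin n → ℚ)} (hw : LinearIndependent ℚ w) :
    LinearIndependent ℝ (fun i => qc (w i)) := by
  set M : Matrix (Fin k) (Fin n) ℚ := Matrix.of w with hM
  have hw' : Function.Injective M.vecMul := Matrix.vecMul_injective_iff.2 hw
  have hker : LinearMap.ker M.vecMulLinear = ⊥ := by
    rw [LinearMap.ker_eq_bot]; exact hw'
  obtain ⟨g, hg⟩ := M.vecMulLinear.exists_leftInverse_of_injective hker
  set N : Matrix (Fin n) (Fin k) ℚ := (LinearMap.toMatrix' g)ᵀ with hN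
  have h3 : ∀ v : Fin n → ℚ, g v = v ᵥ* N := by
    intro v
    rw [hN, Matrix.vecMul_transpose, ← Matrix.toLin'_apply, Matrix.toLin'_toMatrix']
  have hMN : M * N = 1 := by
    ext i j
    have h2 : g ((Pi.single i 1) ᵥ* M) = Pi.single i 1 := LinearMap.congr_fun hg (Pi.single i 1)
    rw [h3, Matrix.vecMul_vecMul] at h2
    have := congr_fun h2 j
    simpa [Matrix.vecMul, dotProduct, Pi.single_apply, Matrix.one_apply, eq_comm] using this
  have key : LinearIndependent ℝ (fun i => (M.map (Rat.cast : ℚ → ℝ)) i) := by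
    refine Matrix.vecMul_injective_iff.1 ?_
    intro c c' hcc
    simp only at hcc
    have h1 : (c ᵥ* M.map Rat.cast) ᵥ* N.map (Rat.cast : ℚ → ℝ) = (c' ᵥ* M.map Rat.cast) ᵥ* N.map Rat.cast := by exact congrArg (· ᵥ* N.map (Rat.cast : ℚ → ℝ)) hcc
    have hmul : M.map (Rat.cast : ℚ → ℝ) * N.map (Rat.cast : ℚ → ℝ) = 1 := by
      have h := Matrix.map_mul (L := M) (M := N) (f := (Rat.castHom ℝ))
      rw [hMN] at h
      rw [show ((Rat.castHom ℝ) : ℚ → ℝ) = (Rat.cast : ℚ → ℝ) from rfl] at h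
      rw [← h, Matrix.map_one _ (by norm_num) (by norm_num)]
    rwa [Matrix.vecMul_vecMul, Matrix.vecMul_vecMul, hmul, Matrix.vecMul_one, Matrix.vecMul_one] at h1
  exact key.map' (WithLp.linearEquiv 2 ℝ (Fin n → ℝ)).symm.toLinearMap (LinearEquiv.ker _)

lemma orthogonal_isRational {B : Submodule ℝ (EuclideanSpace ℝ (Fin n))}
    (hB : IsRationalSubspace B) : IsRationalSubspace Bᗮ := by
  classical
  obtain ⟨s, hs, hspan⟩ := hB
  obtain ⟨t, hts, htspan, htli⟩ := exists_linearIndependent ℝ s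
  have htB : Submodule.span ℝ t = B := by rw [htspan, hspan]
  have htfin : t.Finite := htli.setFinite
  haveI := htfin.fintype
  set e := finrank ℝ B with he
  set k := t.toFinset.card with hk
  have hcard : k = e := by
    rw [hk, he, ← htB]
    exact (finrank_span_set_eq_card htli).symm
  have hrat : ∀ v : t, ∀ i, ∃ q : ℚ, (v : EuclideanSpace ℝ (Fin n)) i = (q : ℝ) :=
    fun v i => hs v (hts v.2) i
  choose x hx using hrat
  let eqv : Fin k ≃ t :=
    t.toFinset.equivFin.symm.trans (Equiv.setCongr (Set.coe_toFinset t))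
  set M : Matrix (Fin k) (Fin n) ℚ := Matrix.of (fun i j => x (eqv i) j) with hMdef
  set ψ : (Fin n → ℚ) →ₗ[ℚ] (Fin k → ℚ) := M.mulVecLin with hψ
  set K := LinearMap.ker ψ with hK
  set m := finrank ℚ K with hm
  have hrn : finrank ℚ (LinearMap.range ψ) + m = n := by
    rw [hm, hK]
    have := LinearMap.finrank_range_add_finrank_ker ψ
    simpa using this
  have hrle : finrank ℚ (LinearMap.range ψ) ≤ k := by
    have := Submodule.finrank_le (LinearMap.range ψ)
    simpa using this
  let b : Basis (Fin m) ℚ K := Module.finBasis ℚ K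
  set y : Fin m → (Fin n → ℚ) := fun a => (b a : Fin n → ℚ) with hy
  have hyK : ∀ a, ψ (y a) = 0 := fun a => (b a).2
  have hyli : LinearIndependent ℚ y :=
    b.linearIndependent.map' K.subtype K.ker_subtype
  set Z : Fin m → EuclideanSpace ℝ (Fin n) := fun a => qc (y a) with hZ
  have hZli : LinearIndependent ℝ Z := li_real hyli
  have hZmem : ∀ a, Z a ∈ Bᗮ := by
    intro a
    rw [← htB]
    intro u hu
    refine Submodule.span_induction (p := fun u _ => (inner ℝ u (Z a) : ℝ) = 0) ?_ ?_ ?_ ?_ hu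
    · intro v hv
      have hv' : v = WithLp.toLp 2 (fun i => ((x ⟨v, hv⟩ i : ℝ))) := by
        ext i; exact hx ⟨v, hv⟩ i
      set i0 : Fin k := eqv.symm ⟨v, hv⟩ with hi0
      have hM0 : ∀ j, M i0 j = x ⟨v, hv⟩ j := by
        intro j; simp [hMdef, hi0]
      have hψ0 := congr_fun (hyK a) i0
      simp only [hψ, Matrix.mulVecLin_apply, Matrix.mulVec, dotProduct,
        Pi.zero_apply] at hψ0
      have hinner : (inner ℝ v (Z a) : ℝ) = ∑ j, v j * (y a j : ℝ) := by
        simp [PiLp.inner_apply, RCLike.inner_apply, hZ, qc]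
        exact Finset.sum_congr rfl fun j _ => mul_comm _ _
      rw [hinner]
      have h4 : ∑ j, v j * (y a j : ℝ) = ((∑ j, M i0 j * y a j : ℚ) : ℝ) := by
        push_cast
        refine Finset.sum_congr rfl fun j _ => ?_
        rw [hM0, ← hx ⟨v, hv⟩ j]
      rw [h4, hψ0]
      norm_num
    · simp
    · intro u v _ _ h1 h2
      rw [inner_add_left, h1, h2, add_zero]
    · intro c u _ h1
      rw [inner_smul_left, h1, mul_zero]
  have hle : Submodule.span ℝ (Set.range Z) ≤ Bᗮ := by
    rw [Submodule.span_le]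
    rintro _ ⟨a, rfl⟩
    exact hZmem a
  have hdim1 : finrank ℝ (Submodule.span ℝ (Set.range Z)) = m := by
    rw [finrank_span_eq_card hZli, Fintype.card_fin]
  have hdim2 : finrank ℝ B + finrank ℝ Bᗮ = n := by
    rw [Submodule.finrank_add_finrank_orthogonal]
    exact finrank_euclideanSpace_fin
  have heq : Submodule.span ℝ (Set.range Z) = Bᗮ := by
    apply Submodule.eq_of_le_of_finrank_le hle
    rw [hdim1]
    omega
  refine ⟨Set.range Z, ?_, heq⟩
  rintro _ ⟨a, rfl⟩ i
  exact ⟨y a i, rfl⟩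

lemma irr_dual {A : Submodule ℝ (EuclideanSpace ℝ (Fin n))} {e j : ℕ} (he : e ≤ n)
    (h : IsIrrational A e j) : IsIrrational Aᗮ (n - e) j := by
  intro B' hB'rat hB'rank
  set C := B'ᗮ with hC
  have hCrat : IsRationalSubspace C := orthogonal_isRational hB'rat
  have hBB : finrank ℝ B' + finrank ℝ B'ᗮ = n := by
    rw [Submodule.finrank_add_finrank_orthogonal]; exact finrank_euclideanSpace_fin
  have hCrank : finrank ℝ C = e := by rw [hC]; omega
  have hkey := h C hCrat hCrank
  have hAA : finrank ℝ A + finrank ℝ Aᗮ = n := by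
    rw [Submodule.finrank_add_finrank_orthogonal]; exact finrank_euclideanSpace_fin
  have horth : Aᗮ ⊓ B' = (A ⊔ C)ᗮ := by
    conv_lhs => rw [show B' = Cᗮ from (Submodule.orthogonal_orthogonal B').symm]
    exact Submodule.inf_orthogonal A C
  have hAC : finrank ℝ ↥(A ⊔ C) + finrank ℝ ↥((A ⊔ C)ᗮ) = n := by
    rw [Submodule.finrank_add_finrank_orthogonal]; exact finrank_euclideanSpace_fin
  have hsup_inf : finrank ℝ ↥(A ⊔ C) + finrank ℝ ↥(A ⊓ C) = finrank ℝ A + finrank ℝ C :=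
    Submodule.finrank_sup_add_finrank_inf_eq A C
  rw [horth]
  omega

end Statement4Aux

/-- `A` is `(e,j)`-irrational iff its orthogonal complement `Aᗮ`
is `(n−e,j)`-irrational. -/


theorem statement4 (n : ℕ) (A : Submodule ℝ (EuclideanSpace ℝ (Fin n))) (d e j : ℕ)
    (hA : finrank ℝ A = d) (he1 : 1 ≤ e) (he2 : e ≤ n - 1)
    (hj1 : 1 ≤ j) (hj2 : j ≤ min d e - (d + e - n)) :
    IsIrrational A e j ↔ IsIrrational Aᗮ (n - e) j := by
  have he : e ≤ n := by omega
  constructor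
  · exact Statement4Aux.irr_dual he
  · intro h
    have h2 := Statement4Aux.irr_dual (show n - e ≤ n by omega) h
    rwa [Submodule.orthogonal_orthogonal, show n - (n - e) = e by omega] at h2
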